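/- In the setting X = Q + yμᵀ with Q ∈ ℝ^{n×p} of full row rank, A = QQᵀ, ν = Qμ, μ_⊥ = (I_p − QᵀA⁻¹Q)μ, and noisy labels ŷ ∈ {-1,1}^n with Δy := ŷ − y, the minimum-norm interpolator w_MNI = Xᵀ(XXᵀ)⁻¹ŷ satisfies S·μᵀw_MNI = (yᵀA⁻¹ŷ)‖μ_⊥‖² + (1 + νᵀA⁻¹y)·νᵀA⁻¹ŷ, where S = (1 + νᵀA⁻¹y)² + ‖μ_⊥‖²(yᵀA⁻¹y). -/
import Mathlib

open Matrix

private lemma vmv_mulVec {n p : ℕ} (y : Fin n → ℝ) (μ v : Fin p → ℝ) :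
    (Matrix.vecMulVec y μ).mulVec v = (μ ⬝ᵥ v) • y := by
  ext i
  simp only [vecMulVec_apply, mulVec, dotProduct, Pi.smul_apply, smul_eq_mul, Finset.sum_mul]
  exact Finset.sum_congr rfl (fun x _ => by ring)

private lemma isUnit_det_of_rank {n : ℕ} (A : Matrix (Fin n) (Fin n) ℝ) (hA : A.rank = n) :
    IsUnit A.det := by
  rw [← Matrix.isUnit_iff_isUnit_det, ← Matrix.mulVec_surjective_iff_isUnit]
  have h : LinearMap.range A.mulVecLin = ⊤ := by
    apply Submodule.eq_top_of_finrank_eq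
    rw [← Matrix.rank, hA, Module.finrank_fintype_fun_eq_card, Fintype.card_fin]
  exact LinearMap.range_eq_top.mp h

private lemma dot_symm {n : ℕ} (M : Matrix (Fin n) (Fin n) ℝ) (hM : Mᵀ = M)
    (u v : Fin n → ℝ) : u ⬝ᵥ M.mulVec v = v ⬝ᵥ M.mulVec u := by
  rw [dotProduct_mulVec, ← mulVec_transpose, hM, dotProduct_comm]

theorem stmt_14 {n p : ℕ} (Q : Matrix (Fin n) (Fin p) ℝ) (hQ : Q.rank = n)
    (y yh : Fin n → ℝ) (hy : ∀ i, y i = 1 ∨ y i = -1)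
    (hyh : ∀ i, yh i = 1 ∨ yh i = -1)
    (μ : Fin p → ℝ)
    (X : Matrix (Fin n) (Fin p) ℝ) (hX : X = Q + Matrix.vecMulVec y μ)
    (A : Matrix (Fin n) (Fin n) ℝ) (hA : A = Q * Qᵀ)
    (ν : Fin n → ℝ) (hν : ν = Q.mulVec μ)
    (Δy : Fin n → ℝ) (hΔy : Δy = yh - y)
    (mp : Fin p → ℝ) (hmp : mp = μ - Qᵀ.mulVec (A⁻¹.mulVec (Q.mulVec μ)))
    (S : ℝ)
    (hS : S = (1 + ν ⬝ᵥ A⁻¹.mulVec y) ^ 2 + (mp ⬝ᵥ mp) * (y ⬝ᵥ A⁻¹.mulVec y))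
    (w : Fin p → ℝ) (hw : w = Xᵀ.mulVec ((X * Xᵀ)⁻¹.mulVec yh)) :
    S * (μ ⬝ᵥ w) = (y ⬝ᵥ A⁻¹.mulVec yh) * (mp ⬝ᵥ mp)
        + (1 + ν ⬝ᵥ A⁻¹.mulVec y) * (ν ⬝ᵥ A⁻¹.mulVec yh) := by
  -- basic facts about A
  have hAd : IsUnit A.det := by
    apply isUnit_det_of_rank
    rw [hA, rank_self_mul_transpose, hQ]
  have hAsymm : Aᵀ = A := by rw [hA, transpose_mul, transpose_transpose]
  have hIsymm : (A⁻¹)ᵀ = A⁻¹ := by rw [transpose_nonsing_inv, hAsymm]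
  have hsym : ∀ u v : Fin n → ℝ, u ⬝ᵥ A⁻¹.mulVec v = v ⬝ᵥ A⁻¹.mulVec u :=
    dot_symm _ hIsymm
  have hAAinv : ∀ v : Fin n → ℝ, A.mulVec (A⁻¹.mulVec v) = v := by
    intro v; rw [mulVec_mulVec, Matrix.mul_nonsing_inv _ hAd, one_mulVec]
  have hAinvA : ∀ v : Fin n → ℝ, A⁻¹.mulVec (A.mulVec v) = v := by
    intro v; rw [mulVec_mulVec, Matrix.nonsing_inv_mul _ hAd, one_mulVec]
  -- scalar abbreviations
  set a : ℝ := ν ⬝ᵥ A⁻¹.mulVec ν with ha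
  set b : ℝ := ν ⬝ᵥ A⁻¹.mulVec y with hb
  set c : ℝ := y ⬝ᵥ A⁻¹.mulVec y with hc
  set m : ℝ := μ ⬝ᵥ μ with hm
  set k : ℝ := mp ⬝ᵥ mp with hk
  -- structure of X
  have hXT : Xᵀ = Qᵀ + Matrix.vecMulVec μ y := by
    rw [hX, transpose_add]
    congr 1
    ext i j
    simp [vecMulVec_apply, mul_comm]
  have hXmul : ∀ s : Fin p → ℝ, X.mulVec s = Q.mulVec s + (μ ⬝ᵥ s) • y := by
    intro s; rw [hX, add_mulVec, vmv_mulVec]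
  have hXTmul : ∀ r : Fin n → ℝ, Xᵀ.mulVec r = Qᵀ.mulVec r + (y ⬝ᵥ r) • μ := by
    intro r; rw [hXT, add_mulVec, vmv_mulVec]
  have hμQT : ∀ r : Fin n → ℝ, μ ⬝ᵥ Qᵀ.mulVec r = ν ⬝ᵥ r := by
    intro r; rw [dotProduct_mulVec, vecMul_transpose, ← hν]
  have hu : X.mulVec μ = ν + m • y := by rw [hXmul, hν, hm]
  -- expansion of B = X Xᵀ acting on a vector
  have hB : ∀ r : Fin n → ℝ, (X * Xᵀ).mulVec r
      = A.mulVec r + (ν ⬝ᵥ r + m * (y ⬝ᵥ r)) • y + (y ⬝ᵥ r) • ν := by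
    intro r
    rw [← mulVec_mulVec, hXTmul r, mulVec_add, mulVec_smul, hu, hXmul, hμQT,
      mulVec_mulVec, ← hA]
    ext i
    simp only [Pi.add_apply, Pi.smul_apply, smul_eq_mul]
    ring
  -- k = m - a
  have hka : k = m - a := by
    have hmp' : mp = μ - Qᵀ.mulVec (A⁻¹.mulVec ν) := by rw [hmp, ← hν]
    have h3 : Qᵀ.mulVec (A⁻¹.mulVec ν) ⬝ᵥ μ = a := by
      rw [dotProduct_comm, hμQT, ha]
    have h4 : Qᵀ.mulVec (A⁻¹.mulVec ν) ⬝ᵥ Qᵀ.mulVec (A⁻¹.mulVec ν) = a := by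
      rw [dotProduct_mulVec, vecMul_transpose, mulVec_mulVec, ← hA, hAAinv, ← ha]
    rw [hk, hmp', dotProduct_sub, sub_dotProduct, sub_dotProduct, hμQT, ← hm,
      h3, h4, ha]
    ring
  -- the key identity
  set z : Fin n → ℝ := k • y + (1 + b) • ν with hz
  have hAz : A⁻¹.mulVec z = k • A⁻¹.mulVec y + (1 + b) • A⁻¹.mulVec ν := by
    rw [hz, mulVec_add, mulVec_smul, mulVec_smul]
  have hyz : y ⬝ᵥ A⁻¹.mulVec z = k * c + (1 + b) * b := by
    rw [hAz, dotProduct_add, dotProduct_smul, dotProduct_smul, ← hc,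
      hsym y ν, ← hb, smul_eq_mul, smul_eq_mul]
  have hνz : ν ⬝ᵥ A⁻¹.mulVec z = k * b + (1 + b) * a := by
    rw [hAz, dotProduct_add, dotProduct_smul, dotProduct_smul, ← hb, ← ha,
      smul_eq_mul, smul_eq_mul]
  have I1 : (X * Xᵀ).mulVec (A⁻¹.mulVec z) = S • (ν + m • y) := by
    rw [hB, hAAinv, hyz, hνz, hz, hS, hka]
    ext i
    simp only [Pi.add_apply, Pi.smul_apply, smul_eq_mul]
    ring
  by_cases hBd : IsUnit (X * Xᵀ).det
  · -- invertible case
    have hBsymm : (X * Xᵀ)ᵀ = X * Xᵀ := by rw [transpose_mul, transpose_transpose]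
    have hBIsymm : ((X * Xᵀ)⁻¹)ᵀ = (X * Xᵀ)⁻¹ := by
      rw [transpose_nonsing_inv, hBsymm]
    have hBinvB : ∀ r : Fin n → ℝ, (X * Xᵀ)⁻¹.mulVec ((X * Xᵀ).mulVec r) = r := by
      intro r; rw [mulVec_mulVec, Matrix.nonsing_inv_mul _ hBd, one_mulVec]
    have h2 : A⁻¹.mulVec z = S • (X * Xᵀ)⁻¹.mulVec (ν + m • y) := by
      calc A⁻¹.mulVec z = (X * Xᵀ)⁻¹.mulVec ((X * Xᵀ).mulVec (A⁻¹.mulVec z)) :=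
            (hBinvB _).symm
        _ = (X * Xᵀ)⁻¹.mulVec (S • (ν + m • y)) := by rw [I1]
        _ = S • (X * Xᵀ)⁻¹.mulVec (ν + m • y) := mulVec_smul _ _ _
    have hμw : μ ⬝ᵥ w = (ν + m • y) ⬝ᵥ (X * Xᵀ)⁻¹.mulVec yh := by
      rw [hw, dotProduct_mulVec, vecMul_transpose, hu]
    calc S * (μ ⬝ᵥ w) = S * (yh ⬝ᵥ (X * Xᵀ)⁻¹.mulVec (ν + m • y)) := by
          rw [hμw, dot_symm _ hBIsymm]
      _ = yh ⬝ᵥ (S • (X * Xᵀ)⁻¹.mulVec (ν + m • y)) := by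
          rw [dotProduct_smul, smul_eq_mul]
      _ = yh ⬝ᵥ A⁻¹.mulVec z := by rw [h2]
      _ = k * (y ⬝ᵥ A⁻¹.mulVec yh) + (1 + b) * (ν ⬝ᵥ A⁻¹.mulVec yh) := by
          rw [hAz, dotProduct_add, dotProduct_smul, dotProduct_smul,
            hsym yh y, hsym yh ν, smul_eq_mul, smul_eq_mul]
      _ = (y ⬝ᵥ A⁻¹.mulVec yh) * k + (1 + b) * (ν ⬝ᵥ A⁻¹.mulVec yh) := by ring
  · -- singular case
    have hB0 : (X * Xᵀ)⁻¹ = 0 := Matrix.nonsing_inv_apply_not_isUnit _ hBd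
    have hw0 : w = 0 := by rw [hw, hB0]; simp
    obtain ⟨v, hv0, hv⟩ : ∃ v ≠ 0, (X * Xᵀ).mulVec v = 0 := by
      rw [Matrix.exists_mulVec_eq_zero_iff]
      simpa [isUnit_iff_ne_zero] using hBd
    have hs : Xᵀ.mulVec v = 0 := by
      have h0 : v ⬝ᵥ (X * Xᵀ).mulVec v = 0 := by rw [hv]; simp
      rw [← mulVec_mulVec, dotProduct_mulVec, ← mulVec_transpose] at h0
      exact dotProduct_self_eq_zero.mp h0
    set t : ℝ := y ⬝ᵥ v with htdef
    have hQv : Qᵀ.mulVec v = (-t) • μ := by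
      have := hXTmul v
      rw [hs] at this
      have : Qᵀ.mulVec v = -((y ⬝ᵥ v) • μ) := by
        rw [eq_comm, neg_eq_iff_add_eq_zero, add_comm]
        exact this.symm
      rw [this, ← htdef, neg_smul]
    have hAv : A.mulVec v = (-t) • ν := by
      rw [hA, ← mulVec_mulVec, hQv, mulVec_smul, hν]
    have hveq : v = (-t) • A⁻¹.mulVec ν := by
      rw [← hAinvA v, hAv, mulVec_smul]
    have ht : t ≠ 0 := by
      intro h
      apply hv0
      rw [hveq, h, neg_zero, zero_smul]
    have hbm : b = -1 := by
      have h5 : t = -t * b := by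
        conv_lhs => rw [htdef, hveq, dotProduct_smul, smul_eq_mul, hsym y ν, ← hb]
      have h6 : t * (1 + b) = 0 := by linarith [h5]
      rcases mul_eq_zero.mp h6 with h | h
      · exact absurd h ht
      · linarith
    have hmp0 : mp = 0 := by
      have hAν : A⁻¹.mulVec ν = (-t)⁻¹ • v := by
        rw [hveq, smul_smul, inv_mul_cancel₀ (by simpa using ht), one_smul]
      rw [hmp, ← hν, hAν, mulVec_smul, hQv, smul_smul,
        inv_mul_cancel₀ (by simpa using ht), one_smul, sub_self]
    have hk0 : k = 0 := by rw [hk, hmp0]; simp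
    rw [hw0, hk0, hbm]
    simp
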